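/- Let G be a k-tree with vertex ordering v₁,...,vₙ where the first k vertices form a clique and each later vertex v is adjacent to a k-clique M_v of earlier vertices. Let C be a connected induced subgraph of G not containing any vertex of the initial clique. Then C contains exactly one vertex v with M_v ∩ C = ∅, namely the least vertex of C in the ordering. -/

import Mathlib

open Finset

/-- `G` together with the data `M` is a `k`-tree with the vertex ordering of `Fin n`:
    the first `k` vertices form a clique, and every later vertex `v` is joined exactly
    to a `k`-clique `M v` of earlier vertices. -/
def IsKTree (n k : ℕ) (G : SimpleGraph (Fin n)) (M : Fin n → Finset (Fin n)) : Prop :=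
  (∀ v : Fin n, ∀ w ∈ M v, w < v) ∧
  (∀ v : Fin n, k ≤ (v : ℕ) → (M v).card = k) ∧
  (∀ v : Fin n, (v : ℕ) < k → M v = Finset.univ.filter (· < v)) ∧
  (∀ v w : Fin n, G.Adj v w ↔ (w ∈ M v ∨ v ∈ M w)) ∧
  (∀ v : Fin n, ∀ w₁ ∈ M v, ∀ w₂ ∈ M v, w₁ ≠ w₂ → G.Adj w₁ w₂)

/-- Key descending lemma: given a walk in `C` from `x` down to an endpoint `b` that is a
    lower bound for the walk, we can find `u ≤ x` in `C` which is `x` itself or a neighbor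
    of `x`, together with a walk from `u` to `b` in `C` all of whose vertices are `≤ u`. -/
lemma descend_aux {n : ℕ} {G : SimpleGraph (Fin n)} {M : Fin n → Finset (Fin n)}
    (hMlt : ∀ v : Fin n, ∀ w ∈ M v, w < v)
    (hadj : ∀ v w : Fin n, G.Adj v w ↔ (w ∈ M v ∨ v ∈ M w))
    (hclq : ∀ v : Fin n, ∀ w₁ ∈ M v, ∀ w₂ ∈ M v, w₁ ≠ w₂ → G.Adj w₁ w₂)
    (C : Finset (Fin n)) :
    ∀ l : ℕ, ∀ x b : Fin n, ∀ q : G.Walk x b, q.length ≤ l →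
      (∀ z ∈ q.support, z ∈ C) → (∀ z ∈ q.support, b ≤ z) →
      ∃ u : Fin n, ∃ q' : G.Walk u b, u ∈ C ∧ u ≤ x ∧ (u = x ∨ G.Adj x u) ∧
        q'.length ≤ l ∧ (∀ z ∈ q'.support, z ∈ C) ∧ (∀ z ∈ q'.support, b ≤ z) ∧
        (∀ z ∈ q'.support, z ≤ u) := by
  have hmem : ∀ a c : Fin n, G.Adj a c → c < a → c ∈ M a := by
    intro a c h hlt
    rcases (hadj a c).1 h with h1 | h1
    · exact h1
    · exact absurd (hMlt c a h1) (asymm hlt)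
  intro l
  induction l using Nat.strong_induction_on with
  | _ l IH =>
  intro x b q hlen hsC hsb
  cases q with
  | nil =>
    exact ⟨x, .nil, hsC x (by simp), le_refl x, Or.inl rfl, by simp, hsC, hsb, by simp⟩
  | @cons _ x1 _ h r =>
    have hx1C : x1 ∈ C := hsC x1 (by simp)
    have hxC : x ∈ C := hsC x (by simp)
    have hbx : b ≤ x := hsb x (by simp)
    have hrlen : r.length ≤ l - 1 := by
      have : r.length + 1 ≤ l := by simpa using hlen
      omega
    have hl1 : 1 ≤ l := by
      have : r.length + 1 ≤ l := by simpa using hlen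
      omega
    have hrC : ∀ z ∈ r.support, z ∈ C := fun z hz => hsC z (by simp [hz])
    have hrb : ∀ z ∈ r.support, b ≤ z := fun z hz => hsb z (by simp [hz])
    obtain ⟨u, q'', huC, hux1, hor, hq''len, hq''C, hq''b, hq''top⟩ :=
      IH (l - 1) (by omega) x1 b r hrlen hrC hrb
    rcases h.ne.lt_or_gt with hxx1 | hx1x
    · -- x < x1
      have hxM : x ∈ M x1 := hmem x1 x h.symm hxx1
      rcases lt_trichotomy u x with hux | hux | hux
      · -- u < x : u and x are both in M x1, hence adjacent
        have hune : u ≠ x1 := by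
          intro he; rw [he] at hux; exact absurd (hxx1.trans hux) (lt_irrefl _)
        have hadj1 : G.Adj x1 u := hor.resolve_left hune
        have huM : u ∈ M x1 := hmem x1 u hadj1 (lt_of_le_of_ne hux1 hune)
        exact ⟨u, q'', huC, hux.le, Or.inr (hclq x1 x hxM u huM (ne_of_gt hux)),
          le_trans hq''len (by omega), hq''C, hq''b, hq''top⟩
      · -- u = x
        exact ⟨u, q'', huC, hux.le, Or.inl hux, le_trans hq''len (by omega),
          hq''C, hq''b, hq''top⟩
      · -- x < u : peel the first step of q''
        have hxu : G.Adj x u := by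
          rcases hor with rfl | hadj1
          · exact h
          · have hune : u ≠ x1 := hadj1.ne'
            have huM : u ∈ M x1 := hmem x1 u hadj1 (lt_of_le_of_ne hux1 hune)
            exact hclq x1 x hxM u huM (ne_of_lt hux)
        have hxMu : x ∈ M u := hmem u x hxu.symm hux
        cases q'' with
        | nil =>
          exact absurd (hux.trans_le hbx) (lt_irrefl _)
        | @cons _ x2 _ h3 s =>
          have hx2u : x2 < u :=
            lt_of_le_of_ne (hq''top x2 (by simp)) h3.ne'
          have hx2M : x2 ∈ M u := hmem u x2 h3 hx2u
          have hslen : s.length + 1 ≤ l - 1 := by simpa using hq''len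
          have hsC' : ∀ z ∈ s.support, z ∈ C := fun z hz => hq''C z (by simp [hz])
          have hsb' : ∀ z ∈ s.support, b ≤ z := fun z hz => hq''b z (by simp [hz])
          by_cases hx2x : x2 = x
          · subst hx2x
            obtain ⟨u', q', h1, h2, h3', h4, h5, h6, h7⟩ :=
              IH (l - 1) (by omega) x2 b s (by omega) hsC' hsb'
            exact ⟨u', q', h1, h2, h3', le_trans h4 (by omega), h5, h6, h7⟩
          · have hxx2 : G.Adj x x2 := hclq u x hxMu x2 hx2M (fun he => hx2x he.symm)
            have hwC : ∀ z ∈ (SimpleGraph.Walk.cons hxx2 s).support, z ∈ C := by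
              intro w hw
              rw [SimpleGraph.Walk.support_cons, List.mem_cons] at hw
              rcases hw with rfl | hw'
              · exact hxC
              · exact hsC' w hw'
            have hwb : ∀ z ∈ (SimpleGraph.Walk.cons hxx2 s).support, b ≤ z := by
              intro w hw
              rw [SimpleGraph.Walk.support_cons, List.mem_cons] at hw
              rcases hw with rfl | hw'
              · exact hbx
              · exact hsb' w hw'
            obtain ⟨u', q', h1, h2, h3', h4, h5, h6, h7⟩ :=
              IH (l - 1) (by omega) x b (SimpleGraph.Walk.cons hxx2 s)
                (by simp only [SimpleGraph.Walk.length_cons]; omega) hwC hwb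
            exact ⟨u', q', h1, h2, h3', le_trans h4 (by omega), h5, h6, h7⟩
    · -- x1 < x
      rcases hor with rfl | hadj1
      · exact ⟨u, q'', huC, hx1x.le, Or.inr h, le_trans hq''len (by omega),
          hq''C, hq''b, hq''top⟩
      · have hux1' : u < x1 := lt_of_le_of_ne hux1 hadj1.ne'
        refine ⟨x1, SimpleGraph.Walk.cons hadj1 q'', hx1C, hx1x.le, Or.inr h, ?_, ?_, ?_, ?_⟩
        · simp only [SimpleGraph.Walk.length_cons]
          omega
        · intro w hw
          rw [SimpleGraph.Walk.support_cons, List.mem_cons] at hw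
          rcases hw with rfl | hw'
          · exact hx1C
          · exact hq''C w hw'
        · intro w hw
          rw [SimpleGraph.Walk.support_cons, List.mem_cons] at hw
          rcases hw with rfl | hw'
          · exact hsb w (by simp)
          · exact hq''b w hw'
        · intro w hw
          rw [SimpleGraph.Walk.support_cons, List.mem_cons] at hw
          rcases hw with rfl | hw'
          · exact le_refl _
          · exact le_trans (hq''top w hw') hux1'.le

/-- In a `k`-tree, a connected induced subgraph `C` avoiding the initial `k`-clique
    contains exactly one vertex `v` with `M v ∩ C = ∅`, namely the least vertex of `C`
    in the ordering. -/
theorem kTree_unique_witnessing_vertex (n k : ℕ) (G : SimpleGraph (Fin n))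
    (M : Fin n → Finset (Fin n)) (hG : IsKTree n k G M)
    (C : Finset (Fin n)) (hC : C.Nonempty)
    (hCk : ∀ v ∈ C, k ≤ (v : ℕ))
    (hconn : (G.induce (C : Set (Fin n))).Connected) :
    C.filter (fun v => Disjoint (M v) C) = {C.min' hC} := by
  obtain ⟨hMlt, -, -, hadj, hclq⟩ := hG
  set m := C.min' hC with hm
  have hmC : m ∈ C := C.min'_mem hC
  have hmem : ∀ a c : Fin n, G.Adj a c → c < a → c ∈ M a := by
    intro a c h hlt
    rcases (hadj a c).1 h with h1 | h1
    · exact h1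
    · exact absurd (hMlt c a h1) (asymm hlt)
  have key : ∀ v ∈ C, v ≠ m → ¬ Disjoint (M v) C := by
    intro v hv hvm hdisj
    have hmv : m < v := lt_of_le_of_ne (C.min'_le v hv) (Ne.symm hvm)
    obtain ⟨p0⟩ := hconn.preconnected ⟨v, by simpa using hv⟩ ⟨m, by simpa using hmC⟩
    set f := (SimpleGraph.Embedding.induce (C : Set (Fin n)) (G := G)).toHom with hf
    set p : G.Walk v m := p0.map f with hp
    have hpsupp : ∀ z ∈ p.support, z ∈ C := by
      intro z hz
      have hz' : z ∈ (p0.map f).support := hz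
      rw [SimpleGraph.Walk.support_map] at hz'
      obtain ⟨a, _, rfl⟩ := List.mem_map.1 hz'
      exact a.2
    have hpsb : ∀ z ∈ p.support, m ≤ z := fun z hz => C.min'_le z (hpsupp z hz)
    obtain ⟨u, q', huC, huv, hor, -, hq'C, hq'b, hq'top⟩ :=
      descend_aux hMlt hadj hclq C p.length v m p le_rfl hpsupp hpsb
    rcases hor with rfl | hadj1
    · -- u = v, use the topped walk q'
      cases q' with
      | nil => exact absurd hmv (lt_irrefl _)
      | @cons _ x1 _ h3 s =>
        have hx1 : x1 < u := lt_of_le_of_ne (hq'top x1 (by simp)) h3.ne'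
        have : x1 ∈ M u := hmem u x1 h3 hx1
        exact (Finset.disjoint_left.1 hdisj) this (hq'C x1 (by simp))
    · have huv' : u < v := lt_of_le_of_ne huv hadj1.ne'
      have : u ∈ M v := hmem v u hadj1 huv'
      exact (Finset.disjoint_left.1 hdisj) this huC
  ext a
  simp only [Finset.mem_filter, Finset.mem_singleton]
  constructor
  · rintro ⟨haC, hdisj⟩
    by_contra hne
    exact key a haC hne hdisj
  · rintro rfl
    refine ⟨hmC, Finset.disjoint_left.2 fun x hx hxC => ?_⟩
    exact absurd (C.min'_le x hxC) (not_le.2 (hMlt m x hx))
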